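/- Let M ∈ ℝ^{m×n} have unit-norm columns and satisfy the RIP of order 2k with constant δ ∈ (0,1). Let x ∈ ℝⁿ have support L with |L| = k, let y = Mx, and let T ⊆ {1,…,n} with |T| ≤ k and κ = |L∖T| ≥ 1. Then there exists an index i ∈ L∖T such that ‖R_{T∪{i}} y‖² ≤ (1 − c_δ/κ) ‖R_T y‖², where c_δ = (1−δ²)(1−δ); i.e., one greedy atom addition contracts the squared residual by the factor (1 − c_δ/κ). -/

import Mathlib

open Matrix

noncomputable section

/-- `M` satisfies the RIP of order `s` with constant `δ` if
`(1−δ)‖v‖² ≤ ‖Mv‖² ≤ (1+δ)‖v‖²` for every `v` with at most `s` nonzero entries. -/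
def RIP {m n : ℕ} (M : Matrix (Fin m) (Fin n) ℝ) (s : ℕ) (δ : ℝ) : Prop :=
  ∀ v : Fin n → ℝ, (∃ S : Finset (Fin n), S.card ≤ s ∧ ∀ i ∉ S, v i = 0) →
    (1 - δ) * (v ⬝ᵥ v) ≤ (M *ᵥ v) ⬝ᵥ (M *ᵥ v) ∧
      (M *ᵥ v) ⬝ᵥ (M *ᵥ v) ≤ (1 + δ) * (v ⬝ᵥ v)

/-- `M_T`: the submatrix of `M` of the columns indexed by `T`. -/
def colsOf {m n : ℕ} (M : Matrix (Fin m) (Fin n) ℝ) (T : Finset (Fin n)) :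
    Matrix (Fin m) {i // i ∈ T} ℝ :=
  M.submatrix id fun j => (j : Fin n)

/-- `P_T = M_T (M_TᵀM_T)⁻¹ M_Tᵀ`. -/
def projT {m n : ℕ} (M : Matrix (Fin m) (Fin n) ℝ) (T : Finset (Fin n)) :
    Matrix (Fin m) (Fin m) ℝ :=
  colsOf M T * ((colsOf M T)ᵀ * colsOf M T)⁻¹ * (colsOf M T)ᵀ

/-- `R_T = I − P_T`. -/
def residT {m n : ℕ} (M : Matrix (Fin m) (Fin n) ℝ) (T : Finset (Fin n)) :
    Matrix (Fin m) (Fin m) ℝ :=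
  1 - projT M T

/-- extension by zero -/
def extS {n : ℕ} (S : Finset (Fin n)) (c : {i // i ∈ S} → ℝ) : Fin n → ℝ :=
  fun j => if h : j ∈ S then c ⟨j, h⟩ else 0

lemma extS_off {n : ℕ} (S : Finset (Fin n)) (c : {i // i ∈ S} → ℝ) {j : Fin n}
    (hj : j ∉ S) : extS S c j = 0 := by simp [extS, hj]

lemma mulVec_extS {m n : ℕ} (M : Matrix (Fin m) (Fin n) ℝ) (S : Finset (Fin n))
    (c : {i // i ∈ S} → ℝ) : M *ᵥ extS S c = colsOf M S *ᵥ c := by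
  funext r
  simp only [mulVec, dotProduct, colsOf, submatrix_apply, id_eq]
  symm
  rw [Finset.univ_eq_attach]
  calc ∑ x ∈ S.attach, M r ↑x * c x
      = ∑ x ∈ S.attach, M r ↑x * extS S c ↑x :=
        Finset.sum_congr rfl (fun x _ => by simp [extS, x.2])
    _ = ∑ j ∈ S, M r j * extS S c j := Finset.sum_attach S (fun j => M r j * extS S c j)
    _ = ∑ j : Fin n, M r j * extS S c j :=
        Finset.sum_subset (Finset.subset_univ S)
          (fun j _ hj => by rw [extS_off S c hj, mul_zero])

lemma dot_extS {n : ℕ} (S : Finset (Fin n)) (c d : {i // i ∈ S} → ℝ) :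
    extS S c ⬝ᵥ extS S d = c ⬝ᵥ d := by
  simp only [dotProduct]
  symm
  rw [Finset.univ_eq_attach]
  calc ∑ x ∈ S.attach, c x * d x
      = ∑ x ∈ S.attach, extS S c ↑x * extS S d ↑x :=
        Finset.sum_congr rfl (fun x _ => by simp [extS, x.2])
    _ = ∑ j ∈ S, extS S c j * extS S d j := Finset.sum_attach S (fun j => extS S c j * extS S d j)
    _ = ∑ j : Fin n, extS S c j * extS S d j :=
        Finset.sum_subset (Finset.subset_univ S)
          (fun j _ hj => by rw [extS_off S c hj, zero_mul])

lemma dot_mulVec_mulVec {a b c : Type*} [Fintype a] [Fintype b] [Fintype c]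
    (A : Matrix a b ℝ) (B : Matrix a c ℝ) (x : b → ℝ) (z : c → ℝ) :
    (A *ᵥ x) ⬝ᵥ (B *ᵥ z) = x ⬝ᵥ ((Aᵀ * B) *ᵥ z) := by
  rw [← Matrix.mulVec_mulVec, Matrix.dotProduct_mulVec x Aᵀ, Matrix.vecMul_transpose]



lemma dot_self_nonneg' {a : Type*} [Fintype a] (v : a → ℝ) : 0 ≤ v ⬝ᵥ v :=
  Finset.sum_nonneg fun i _ => mul_self_nonneg _

lemma dot_self_pos {a : Type*} [Fintype a] {v : a → ℝ} (hv : v ≠ 0) : 0 < v ⬝ᵥ v :=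
  lt_of_le_of_ne (dot_self_nonneg' v)
    (fun h => hv (dotProduct_self_eq_zero.mp h.symm))

variable {m n : ℕ} {M : Matrix (Fin m) (Fin n) ℝ} {s : ℕ} {δ : ℝ}

lemma gram_isUnit (hδ1 : δ < 1) (hRIP : RIP M s δ) (S : Finset (Fin n))
    (hcard : S.card ≤ s) : IsUnit ((colsOf M S)ᵀ * colsOf M S).det := by
  have hpd : ((colsOf M S)ᵀ * colsOf M S).PosDef := by
    rw [Matrix.posDef_iff_dotProduct_mulVec]
    constructor
    · have := Matrix.isHermitian_conjTranspose_mul_self (colsOf M S)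
      simpa [Matrix.conjTranspose_eq_transpose_of_trivial] using this
    · intro v hv
      have hkey : v ⬝ᵥ (((colsOf M S)ᵀ * colsOf M S) *ᵥ v)
          = (M *ᵥ extS S v) ⬝ᵥ (M *ᵥ extS S v) := by
        rw [← dot_mulVec_mulVec, mulVec_extS]
      have hrip := (hRIP (extS S v) ⟨S, hcard, fun i hi => extS_off S v hi⟩).1
      rw [dot_extS] at hrip
      have hvv : 0 < v ⬝ᵥ v := dot_self_pos hv
      have : 0 < (M *ᵥ extS S v) ⬝ᵥ (M *ᵥ extS S v) := by nlinarith
      simpa [hkey] using this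
  exact isUnit_iff_ne_zero.mpr (ne_of_gt hpd.det_pos)

variable {S : Finset (Fin n)}

lemma proj_mul_cols (hdet : IsUnit ((colsOf M S)ᵀ * colsOf M S).det) :
    projT M S * colsOf M S = colsOf M S := by
  unfold projT
  rw [Matrix.mul_assoc, Matrix.mul_assoc, Matrix.nonsing_inv_mul _ hdet, Matrix.mul_one]

lemma proj_symm (hdet : IsUnit ((colsOf M S)ᵀ * colsOf M S).det) :
    (projT M S)ᵀ = projT M S := by
  simp [projT, Matrix.transpose_mul, Matrix.transpose_nonsing_inv, Matrix.mul_assoc]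

lemma proj_idem (hdet : IsUnit ((colsOf M S)ᵀ * colsOf M S).det) :
    projT M S * projT M S = projT M S := by
  have h1 : projT M S * projT M S
      = (projT M S * colsOf M S) * (((colsOf M S)ᵀ * colsOf M S)⁻¹ * (colsOf M S)ᵀ) := by
    simp only [projT, Matrix.mul_assoc]
  rw [h1, proj_mul_cols hdet, projT, Matrix.mul_assoc]

lemma resid_symm (hdet : IsUnit ((colsOf M S)ᵀ * colsOf M S).det) :
    (residT M S)ᵀ = residT M S := by
  simp [residT, Matrix.transpose_sub, Matrix.transpose_one, proj_symm hdet]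

lemma resid_mul_proj (hdet : IsUnit ((colsOf M S)ᵀ * colsOf M S).det) :
    residT M S * projT M S = 0 := by
  simp [residT, Matrix.sub_mul, proj_idem hdet]

lemma resid_mul_cols (hdet : IsUnit ((colsOf M S)ᵀ * colsOf M S).det) :
    residT M S * colsOf M S = 0 := by
  simp [residT, Matrix.sub_mul, proj_mul_cols hdet]

lemma resid_idem (hdet : IsUnit ((colsOf M S)ᵀ * colsOf M S).det) :
    residT M S * residT M S = residT M S := by
  simp only [residT, Matrix.sub_mul, Matrix.mul_sub, Matrix.one_mul, Matrix.mul_one,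
    proj_idem hdet]
  abel

lemma supported_eq_extS {u : Fin n → ℝ} (hu : ∀ j ∉ S, u j = 0) :
    u = extS S (fun i => u ↑i) := by
  funext j
  by_cases h : j ∈ S <;> simp [extS, h, hu j]

lemma resid_mulVec_supported (hdet : IsUnit ((colsOf M S)ᵀ * colsOf M S).det)
    {u : Fin n → ℝ} (hu : ∀ j ∉ S, u j = 0) :
    residT M S *ᵥ (M *ᵥ u) = 0 := by
  rw [supported_eq_extS hu, mulVec_extS, Matrix.mulVec_mulVec, resid_mul_cols hdet,
    Matrix.zero_mulVec]

lemma proj_mulVec (a : Fin m → ℝ) :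
    projT M S *ᵥ a
      = M *ᵥ extS S (((((colsOf M S)ᵀ * colsOf M S)⁻¹) * (colsOf M S)ᵀ) *ᵥ a) := by
  rw [mulVec_extS, Matrix.mulVec_mulVec, projT, Matrix.mul_assoc]

lemma resid_le (hdet : IsUnit ((colsOf M S)ᵀ * colsOf M S).det)
    (y : Fin m → ℝ) {u : Fin n → ℝ} (hu : ∀ j ∉ S, u j = 0) :
    (residT M S *ᵥ y) ⬝ᵥ (residT M S *ᵥ y) ≤ (y - M *ᵥ u) ⬝ᵥ (y - M *ᵥ u) := by
  set a := residT M S *ᵥ y with ha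
  set w := projT M S *ᵥ y - M *ᵥ u with hw
  have hdecomp : y - M *ᵥ u = a + w := by
    simp only [ha, hw, residT, Matrix.sub_mulVec, Matrix.one_mulVec]
    abel
  have hcross : a ⬝ᵥ w = 0 := by
    rw [hw, dotProduct_sub, ha, supported_eq_extS hu, mulVec_extS,
      dot_mulVec_mulVec, dot_mulVec_mulVec,
      show (residT M S)ᵀ * projT M S = 0 from by
        rw [resid_symm hdet]; exact resid_mul_proj hdet,
      show (residT M S)ᵀ * colsOf M S = 0 from by
        rw [resid_symm hdet]; exact resid_mul_cols hdet]
    simp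
  have hexp : (a + w) ⬝ᵥ (a + w) = a ⬝ᵥ a + 2 * (a ⬝ᵥ w) + w ⬝ᵥ w := by
    simp only [dotProduct_add, add_dotProduct, dotProduct_comm w a]
    ring
  rw [hdecomp, hexp, hcross]
  have := dot_self_nonneg' w
  linarith


theorem stmt9 {m n k : ℕ} (M : Matrix (Fin m) (Fin n) ℝ) (δ : ℝ)
    (hδ0 : 0 < δ) (hδ1 : δ < 1)
    (hunit : ∀ j : Fin n, (fun r => M r j) ⬝ᵥ (fun r => M r j) = 1)
    (hRIP : RIP M (2 * k) δ)
    (x : Fin n → ℝ) (L : Finset (Fin n)) (hsupp : ∀ i, x i ≠ 0 ↔ i ∈ L)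
    (hL : L.card = k) (y : Fin m → ℝ) (hy : y = M *ᵥ x)
    (T : Finset (Fin n)) (hT : T.card ≤ k)
    (κ : ℕ) (hκ : κ = (L \ T).card) (hκ1 : 1 ≤ κ) :
    ∃ i ∈ L \ T,
      (residT M (insert i T) *ᵥ y) ⬝ᵥ (residT M (insert i T) *ᵥ y) ≤
        (1 - (1 - δ ^ 2) * (1 - δ) / (κ : ℝ)) *
          ((residT M T *ᵥ y) ⬝ᵥ (residT M T *ᵥ y)) := by
  classical
  set Ω : Finset (Fin n) := L \ T with hΩdef
  have hΩcard : Ω.card ≤ k := hL ▸ Finset.card_le_card Finset.sdiff_subset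
  have hΩpos : 0 < Ω.card := by omega
  have hΩne : Ω.Nonempty := Finset.card_pos.mp hΩpos
  have hk1 : 1 ≤ k := le_trans hΩpos hΩcard
  have hdetT : IsUnit ((colsOf M T)ᵀ * colsOf M T).det :=
    gram_isUnit hδ1 hRIP T (by omega)
  -- split x
  set v1 : Fin n → ℝ := fun j => if j ∈ T then x j else 0 with hv1def
  set v2 : Fin n → ℝ := fun j => if j ∈ T then 0 else x j with hv2def
  have hv1supp : ∀ j ∉ T, v1 j = 0 := fun j hj => by simp [hv1def, hj]
  have hv2supp : ∀ j ∉ Ω, v2 j = 0 := by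
    intro j hj
    by_cases h : j ∈ T
    · simp [hv2def, h]
    · have hjL : j ∉ L := by
        intro hL'
        exact hj (Finset.mem_sdiff.mpr ⟨hL', h⟩)
      have : x j = 0 := by
        by_contra hx0
        exact hjL ((hsupp j).mp hx0)
      simp [hv2def, h, this]
  have hx12 : x = v1 + v2 := by
    funext j
    by_cases h : j ∈ T <;> simp [hv1def, hv2def, h]
  set r : Fin m → ℝ := residT M T *ᵥ y with hrdef
  have hr2 : r = residT M T *ᵥ (M *ᵥ v2) := by
    rw [hrdef, hy, hx12, Matrix.mulVec_add, Matrix.mulVec_add,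
      resid_mulVec_supported hdetT hv1supp, zero_add]
  -- r as M applied to a 2k-sparse vector
  set w : {i // i ∈ T} → ℝ :=
    ((((colsOf M T)ᵀ * colsOf M T)⁻¹ * (colsOf M T)ᵀ) *ᵥ (M *ᵥ v2)) with hwdef
  have hrd : r = M *ᵥ (v2 - extS T w) := by
    rw [hr2, Matrix.mulVec_sub]
    have : residT M T *ᵥ (M *ᵥ v2) = M *ᵥ v2 - projT M T *ᵥ (M *ᵥ v2) := by
      unfold residT
      rw [Matrix.sub_mulVec, Matrix.one_mulVec]
    rw [this, proj_mulVec (M *ᵥ v2)]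
  have hsuppd : ∀ j ∉ T ∪ Ω, (v2 - extS T w) j = 0 := by
    intro j hj
    rw [Finset.mem_union] at hj
    push_neg at hj
    simp [hv2supp j hj.2, extS_off T w hj.1]
  have hcardU : (T ∪ Ω).card ≤ 2 * k :=
    le_trans (Finset.card_union_le T Ω) (by omega)
  have hripd := (hRIP (v2 - extS T w) ⟨T ∪ Ω, hcardU, hsuppd⟩).1
  rw [← hrd] at hripd
  -- disjoint support gives ⟨v2, extS T w⟩ = 0
  have hv2w : v2 ⬝ᵥ extS T w = 0 := by
    apply Finset.sum_eq_zero
    intro j _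
    by_cases h : j ∈ T
    · simp [hv2def, h]
    · rw [extS_off T w h, mul_zero]
  have hdd : (v2 - extS T w) ⬝ᵥ (v2 - extS T w)
      = v2 ⬝ᵥ v2 - 2 * (v2 ⬝ᵥ extS T w) + extS T w ⬝ᵥ extS T w := by
    simp only [dotProduct_sub, sub_dotProduct, dotProduct_comm (extS T w) v2]
    ring
  have step3 : (1 - δ) * (v2 ⬝ᵥ v2) ≤ r ⬝ᵥ r := by
    have hww := dot_self_nonneg' (extS T w)
    nlinarith [hripd, hdd, hv2w]
  -- ⟨r, Mv2⟩ = ⟨r,r⟩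
  have hfix : residT M T *ᵥ r = r := by
    rw [hrdef, Matrix.mulVec_mulVec, resid_idem hdetT]
  have step1 : r ⬝ᵥ (M *ᵥ v2) = r ⬝ᵥ r := by
    calc r ⬝ᵥ (M *ᵥ v2) = (residT M T *ᵥ r) ⬝ᵥ (M *ᵥ v2) := by rw [hfix]
      _ = r ⬝ᵥ (((residT M T)ᵀ * M) *ᵥ v2) := dot_mulVec_mulVec _ _ _ _
      _ = r ⬝ᵥ (residT M T *ᵥ (M *ᵥ v2)) := by
          rw [resid_symm hdetT, ← Matrix.mulVec_mulVec]
      _ = r ⬝ᵥ r := by rw [← hr2]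
  -- expand ⟨r, Mv2⟩ as a sum over Ω
  have hexpand : r ⬝ᵥ (M *ᵥ v2) = ∑ j ∈ Ω, v2 j * (r ⬝ᵥ fun ρ => M ρ j) := by
    have h1 : r ⬝ᵥ (M *ᵥ v2) = ∑ j : Fin n, v2 j * (r ⬝ᵥ fun ρ => M ρ j) := by
      simp only [dotProduct, mulVec, Finset.mul_sum]
      rw [Finset.sum_comm]
      refine Finset.sum_congr rfl fun j _ => ?_
      exact Finset.sum_congr rfl fun ρ _ => by ring
    rw [h1]
    exact (Finset.sum_subset (Finset.subset_univ Ω)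
      (fun j _ hj => by rw [hv2supp j hj, zero_mul])).symm
  set Ssum : ℝ := ∑ j ∈ Ω, (r ⬝ᵥ fun ρ => M ρ j) ^ 2 with hSdef
  have hcs : (r ⬝ᵥ r) ^ 2 ≤ (v2 ⬝ᵥ v2) * Ssum := by
    rw [← step1, hexpand]
    have h2 : ∑ j ∈ Ω, v2 j ^ 2 = v2 ⬝ᵥ v2 := by
      rw [dotProduct]
      rw [← Finset.sum_subset (Finset.subset_univ Ω)
        (fun j _ hj => by rw [hv2supp j hj, mul_zero])]
      exact Finset.sum_congr rfl fun j _ => pow_two (v2 j)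
    calc (∑ j ∈ Ω, v2 j * (r ⬝ᵥ fun ρ => M ρ j)) ^ 2
        ≤ (∑ j ∈ Ω, v2 j ^ 2) * Ssum :=
          Finset.sum_mul_sq_le_sq_mul_sq Ω _ _
      _ = (v2 ⬝ᵥ v2) * Ssum := by rw [h2]
  have hSnonneg : 0 ≤ Ssum := Finset.sum_nonneg fun j _ => sq_nonneg _
  have hrrnonneg : 0 ≤ r ⬝ᵥ r := dot_self_nonneg' r
  have step4 : (1 - δ) * (r ⬝ᵥ r) ≤ Ssum := by
    rcases eq_or_lt_of_le hrrnonneg with h0 | h0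
    · rw [← h0]; simpa using hSnonneg
    · have hvv : 0 ≤ v2 ⬝ᵥ v2 := dot_self_nonneg' v2
      nlinarith [mul_le_mul_of_nonneg_right step3 hSnonneg]
  -- pick a good index
  have hsumconst : ∑ _j ∈ Ω, (1 - δ) * (r ⬝ᵥ r) / (κ : ℝ) ≤ Ssum := by
    rw [Finset.sum_const, nsmul_eq_mul, hκ]
    have hne : ((Ω.card : ℕ) : ℝ) ≠ 0 := by exact_mod_cast hΩpos.ne'
    have heq : (Ω.card : ℝ) * ((1 - δ) * (r ⬝ᵥ r) / (Ω.card : ℝ))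
        = (1 - δ) * (r ⬝ᵥ r) := by field_simp
    rw [heq]
    exact step4
  rw [hSdef] at hsumconst
  obtain ⟨i, hiΩ, hi⟩ := Finset.exists_le_of_sum_le hΩne hsumconst
  refine ⟨i, hiΩ, ?_⟩
  have hiT : i ∉ T := (Finset.mem_sdiff.mp hiΩ).2
  have hScard : (insert i T).card ≤ 2 * k :=
    le_trans (Finset.card_insert_le i T) (by omega)
  have hdet' : IsUnit ((colsOf M (insert i T))ᵀ * colsOf M (insert i T)).det :=
    gram_isUnit hδ1 hRIP (insert i T) hScard
  set t : ℝ := r ⬝ᵥ fun ρ => M ρ i with htdef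
  set wT : {j // j ∈ T} → ℝ :=
    ((((colsOf M T)ᵀ * colsOf M T)⁻¹ * (colsOf M T)ᵀ) *ᵥ y) with hwTdef
  set u' : Fin n → ℝ := extS T wT + Pi.single i t with hu'def
  have hu'supp : ∀ j ∉ insert i T, u' j = 0 := by
    intro j hj
    rw [Finset.mem_insert] at hj
    push_neg at hj
    simp [hu'def, extS_off T wT hj.2, Pi.single_eq_of_ne hj.1]
  have hMsingle : M *ᵥ Pi.single i t = t • (fun ρ => M ρ i) := by
    funext ρ
    simp [mulVec, dotProduct, Pi.single_apply, mul_comm]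
  have hkey : y - M *ᵥ u' = r - t • (fun ρ => M ρ i) := by
    rw [hu'def, Matrix.mulVec_add, hMsingle]
    have h1 : M *ᵥ extS T wT = projT M T *ᵥ y := (proj_mulVec y).symm
    have h2 : r = y - projT M T *ᵥ y := by
      rw [hrdef]; simp [residT, Matrix.sub_mulVec, Matrix.one_mulVec]
    rw [h1, h2]
    abel
  have hmain := resid_le hdet' y hu'supp
  rw [hkey] at hmain
  have hnorm : (r - t • (fun ρ => M ρ i)) ⬝ᵥ (r - t • (fun ρ => M ρ i))
      = r ⬝ᵥ r - t ^ 2 := by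
    have hcol : (fun ρ => M ρ i) ⬝ᵥ (fun ρ => M ρ i) = 1 := hunit i
    have hcr : (fun ρ => M ρ i) ⬝ᵥ r = t := by
      rw [htdef, dotProduct_comm]
    simp only [dotProduct_sub, sub_dotProduct, dotProduct_smul, smul_dotProduct,
      smul_eq_mul, hcol, hcr, ← htdef]
    ring
  rw [hnorm] at hmain
  -- final arithmetic
  have hκpos : (0 : ℝ) < (κ : ℝ) := by exact_mod_cast hκ1
  have hstep : (1 - δ ^ 2) * (1 - δ) / (κ : ℝ) * (r ⬝ᵥ r)
      ≤ (1 - δ) * (r ⬝ᵥ r) / (κ : ℝ) := by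
    have h1 : (1 - δ ^ 2) * (1 - δ) * (r ⬝ᵥ r) ≤ (1 - δ) * (r ⬝ᵥ r) := by
      nlinarith [mul_nonneg (mul_nonneg (by linarith : (0:ℝ) ≤ 1 - δ) hrrnonneg)
        (sq_nonneg δ)]
    calc (1 - δ ^ 2) * (1 - δ) / (κ : ℝ) * (r ⬝ᵥ r)
        = (1 - δ ^ 2) * (1 - δ) * (r ⬝ᵥ r) / (κ : ℝ) := by ring
      _ ≤ (1 - δ) * (r ⬝ᵥ r) / (κ : ℝ) := by gcongr
  have ht2 : (1 - δ) * (r ⬝ᵥ r) / (κ : ℝ) ≤ t ^ 2 := hi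
  calc (residT M (insert i T) *ᵥ y) ⬝ᵥ (residT M (insert i T) *ᵥ y)
      ≤ r ⬝ᵥ r - t ^ 2 := hmain
    _ ≤ (1 - (1 - δ ^ 2) * (1 - δ) / (κ : ℝ)) * (r ⬝ᵥ r) := by
        have : (1 - (1 - δ ^ 2) * (1 - δ) / (κ : ℝ)) * (r ⬝ᵥ r)
            = r ⬝ᵥ r - (1 - δ ^ 2) * (1 - δ) / (κ : ℝ) * (r ⬝ᵥ r) := by ring
        rw [this]
        linarith

end
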